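/- Let V(r) := r^{-6} − 2r^{-3} and let ζ₆ := ∑_{(m,n)≠(0,0)} (m²+n²)^{-3} and ζ₁₂ := ∑_{(m,n)≠(0,0)} (m²+n²)^{-6}. Define X₁(A) := (2ζ₆A³ − √(4ζ₆²A⁶ − 32A⁴ + 8ζ₁₂A²))/4 and X₂(A) := (2ζ₆A³ + √(4ζ₆²A⁶ − 32A⁴ + 8ζ₁₂A²))/4. Then there exists A₃ > 0 such that for every A > A₃, every minimizer y_A ≥ 1 of the function y ↦ E_V(0,y,A) on [1,∞) satisfies X₁(A)^{1/3} ≤ y_A ≤ X₂(A)^{1/3}. In particular: (i) there exists C > 0 such that y_A ≤ C·A for all A > A₃; and (ii) for every M > 0 there exists A' such that for all A > A', every minimizer y_A ≥ 1 of y ↦ E_V(0,y,A) satisfies y_A > M (i.e. y_A → +∞ as A → +∞). -/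

import Mathlib

open Real

noncomputable section

/-- The classical Lennard-Jones potential `V(r) = r^{-6} − 2 r^{-3}`. -/
def VLJc (r : ℝ) : ℝ := r ^ (-6 : ℤ) - 2 * r ^ (-3 : ℤ)

def Qf (x y A : ℝ) (p : ℤ × ℤ) : ℝ :=
  A * (((p.1 : ℝ) + x * (p.2 : ℝ)) ^ 2 / y + y * (p.2 : ℝ) ^ 2)

def EV (x y A : ℝ) : ℝ :=
  ∑' p : {p : ℤ × ℤ // p ≠ 0}, VLJc (Qf x y A p.1)

/-- `ζ_{ℤ²}(6) = ∑ (m²+n²)^{-3}`. -/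
def zeta6 : ℝ :=
  ∑' p : {p : ℤ × ℤ // p ≠ 0}, ((p.1.1 : ℝ) ^ 2 + (p.1.2 : ℝ) ^ 2) ^ (-3 : ℤ)

/-- `ζ_{ℤ²}(12) = ∑ (m²+n²)^{-6}`. -/
def zeta12 : ℝ :=
  ∑' p : {p : ℤ × ℤ // p ≠ 0}, ((p.1.1 : ℝ) ^ 2 + (p.1.2 : ℝ) ^ 2) ^ (-6 : ℤ)

def X1 (A : ℝ) : ℝ :=
  (2 * zeta6 * A ^ 3 - Real.sqrt (4 * zeta6 ^ 2 * A ^ 6 - 32 * A ^ 4 + 8 * zeta12 * A ^ 2)) / 4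

def X2 (A : ℝ) : ℝ :=
  (2 * zeta6 * A ^ 3 + Real.sqrt (4 * zeta6 ^ 2 * A ^ 6 - 32 * A ^ 4 + 8 * zeta12 * A ^ 2)) / 4

namespace RectDeg


abbrev I2 := {p : ℤ × ℤ // p ≠ 0}

def g (k : ℤ) : ℝ := if k = 0 then 1 else (|(k : ℝ)| ^ (3:ℕ))⁻¹

lemma g_nonneg (k : ℤ) : 0 ≤ g k := by
  unfold g; split <;> positivity

lemma g_summable : Summable g := by
  have h1 : Summable (fun n : ℤ => 1 / |(n:ℝ) + 0| ^ (3:ℝ)) :=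
    (Real.summable_one_div_int_add_rpow 0 3).mpr (by norm_num)
  have h2 : Summable (({0} : Set ℤ).indicator (fun _ => (1:ℝ))) :=
    summable_of_ne_finset_zero (s := {0}) (by
      intro b hb
      simp only [Finset.mem_singleton] at hb
      simp [Set.indicator, hb])
  refine Summable.of_nonneg_of_le g_nonneg (fun k => ?_) (h1.add h2)
  unfold g
  by_cases hk : k = 0
  · simp [hk, Set.indicator]
  · have h3 : |(k:ℝ)| ^ (3:ℝ) = |(k:ℝ)| ^ (3:ℕ) := by
      rw [← Real.rpow_natCast |(k:ℝ)| 3]; norm_num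
    simp only [hk, if_false, Set.indicator, Set.mem_singleton_iff, add_zero, h3]
    simp [hk, one_div]

/-- abbreviation for the squared norm -/
def sq2 (p : I2) : ℝ := (p.1.1 : ℝ) ^ 2 + (p.1.2 : ℝ) ^ 2

lemma one_le_sq2 (p : I2) : 1 ≤ sq2 p := by
  have hp : p.1.1 ≠ 0 ∨ p.1.2 ≠ 0 := by
    rcases p with ⟨⟨m, n⟩, hp⟩
    by_contra h
    push_neg at h
    exact hp (Prod.ext h.1 h.2)
  unfold sq2
  rcases hp with h | h
  · have : (1:ℝ) ≤ |(p.1.1:ℝ)| := by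
      have := Int.one_le_abs (by exact_mod_cast h : p.1.1 ≠ 0)
      exact_mod_cast (by exact_mod_cast this : (1:ℤ) ≤ |p.1.1|)
    nlinarith [sq_nonneg ((p.1.2:ℝ)), abs_nonneg ((p.1.1:ℝ)), sq_abs ((p.1.1:ℝ))]
  · have : (1:ℝ) ≤ |(p.1.2:ℝ)| := by
      have := Int.one_le_abs (by exact_mod_cast h : p.1.2 ≠ 0)
      exact_mod_cast (by exact_mod_cast this : (1:ℤ) ≤ |p.1.2|)
    nlinarith [sq_nonneg ((p.1.1:ℝ)), abs_nonneg ((p.1.2:ℝ)), sq_abs ((p.1.2:ℝ))]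

lemma sq2_pos (p : I2) : 0 < sq2 p := lt_of_lt_of_le one_pos (one_le_sq2 p)

lemma sq2_le_g (p : I2) : (sq2 p) ^ (-3 : ℤ) ≤ g p.1.1 * g p.1.2 := by
  have h1 := one_le_sq2 p
  have h0 := sq2_pos p
  rw [zpow_neg, zpow_ofNat]
  by_cases hm : p.1.1 = 0
  · have hn : p.1.2 ≠ 0 := by
      rcases p with ⟨⟨m,n⟩,hp⟩; simp_all; exact fun h => hp (by simp [hm, h, Prod.ext_iff])
    have habs : (1:ℝ) ≤ |(p.1.2:ℝ)| := by
      exact_mod_cast (Int.one_le_abs hn : (1:ℤ) ≤ |p.1.2|)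
    unfold g
    simp only [hm, hn, ite_true, if_true, if_false, ite_false, if_neg hn, one_mul]
    rw [inv_le_inv₀ (by positivity) (by positivity)]
    have : sq2 p = (p.1.2:ℝ)^2 := by unfold sq2; simp [hm]
    rw [this]
    have : |(p.1.2:ℝ)|^(3:ℕ) ≤ (|(p.1.2:ℝ)|^2)^(3:ℕ) := by
      apply pow_le_pow_left₀ (by positivity)
      nlinarith
    calc |(p.1.2:ℝ)|^(3:ℕ) ≤ (|(p.1.2:ℝ)|^2)^(3:ℕ) := this
      _ = ((p.1.2:ℝ)^2)^(3:ℕ) := by rw [sq_abs]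
  · by_cases hn : p.1.2 = 0
    · have habs : (1:ℝ) ≤ |(p.1.1:ℝ)| := by
        exact_mod_cast (Int.one_le_abs hm : (1:ℤ) ≤ |p.1.1|)
      unfold g
      simp only [hm, hn, ite_true, if_true, if_false, ite_false, if_neg hm, mul_one]
      rw [inv_le_inv₀ (by positivity) (by positivity)]
      have h2 : sq2 p = (p.1.1:ℝ)^2 := by unfold sq2; simp [hn]
      rw [h2]
      calc |(p.1.1:ℝ)|^(3:ℕ) ≤ (|(p.1.1:ℝ)|^2)^(3:ℕ) := by
            apply pow_le_pow_left₀ (by positivity); nlinarith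
        _ = ((p.1.1:ℝ)^2)^(3:ℕ) := by rw [sq_abs]
    · have h1m : (1:ℝ) ≤ |(p.1.1:ℝ)| := by
        exact_mod_cast (Int.one_le_abs hm : (1:ℤ) ≤ |p.1.1|)
      have h1n : (1:ℝ) ≤ |(p.1.2:ℝ)| := by
        exact_mod_cast (Int.one_le_abs hn : (1:ℤ) ≤ |p.1.2|)
      unfold g
      simp only [if_neg hm, if_neg hn]
      rw [← mul_inv]
      rw [inv_le_inv₀ (by positivity) (by positivity)]
      rw [← mul_pow]
      apply pow_le_pow_left₀ (by positivity)
      have : |(p.1.1:ℝ)| * |(p.1.2:ℝ)| ≤ ((p.1.1:ℝ)^2 + (p.1.2:ℝ)^2) := by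
        nlinarith [sq_abs ((p.1.1:ℝ)), sq_abs ((p.1.2:ℝ)), sq_nonneg (|(p.1.1:ℝ)| - |(p.1.2:ℝ)|)]
      exact this

lemma S3 : Summable (fun p : I2 => (sq2 p) ^ (-3 : ℤ)) := by
  have h := (g_summable.mul_of_nonneg g_summable g_nonneg g_nonneg).subtype
    {p : ℤ × ℤ | p ≠ 0}
  refine Summable.of_nonneg_of_le (fun p => ?_) (fun p => sq2_le_g p) h
  have := sq2_pos p
  positivity

lemma S12 : Summable (fun p : I2 => (sq2 p) ^ (-6 : ℤ)) := by
  refine Summable.of_nonneg_of_le (fun p => ?_) (fun p => ?_) S3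
  · have := sq2_pos p; positivity
  · have h1 := one_le_sq2 p
    rw [zpow_neg, zpow_neg, inv_le_inv₀ (by positivity) (by positivity)]
    exact zpow_le_zpow_right₀ h1 (by norm_num)

lemma zeta6_pos : 0 < zeta6 := by
  have hterm : ∀ p : I2, 0 ≤ (sq2 p) ^ (-3 : ℤ) := fun p => by
    have := sq2_pos p; positivity
  have := Summable.tsum_pos S3 hterm ⟨(1,0), by simp [Prod.ext_iff]⟩ (by norm_num [sq2])
  exact this

lemma zeta12_nonneg : 0 ≤ zeta12 :=
  tsum_nonneg (fun p => by have := sq2_pos p; positivity)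



section
variable {y A : ℝ}

lemma Qf_eq (p : I2) : Qf 0 y A p.1 = A * ((p.1.1:ℝ)^2 / y + y * (p.1.2:ℝ)^2) := by
  unfold Qf; ring_nf

lemma Qf_lb (hy : 1 ≤ y) (hA : 0 < A) (p : I2) :
    A * sq2 p / y ≤ Qf 0 y A p.1 := by
  rw [Qf_eq]
  have hy0 : 0 < y := lt_of_lt_of_le one_pos hy
  have h1 : (p.1.2:ℝ)^2 / y ≤ y * (p.1.2:ℝ)^2 := by
    rw [div_le_iff₀ hy0]
    have hyy : 1 ≤ y * y := one_le_mul_of_one_le_of_one_le hy hy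
    nlinarith [sq_nonneg ((p.1.2:ℝ))]
  have : sq2 p / y = (p.1.1:ℝ)^2/y + (p.1.2:ℝ)^2/y := by unfold sq2; ring
  calc A * sq2 p / y = A * ((p.1.1:ℝ)^2/y + (p.1.2:ℝ)^2/y) := by rw [mul_div_assoc, this]
    _ ≤ A * ((p.1.1:ℝ)^2 / y + y * (p.1.2:ℝ)^2) := by
        apply mul_le_mul_of_nonneg_left _ hA.le
        linarith

lemma Qf_pos (hy : 1 ≤ y) (hA : 0 < A) (p : I2) : 0 < Qf 0 y A p.1 :=
  lt_of_lt_of_le (by have := sq2_pos p; positivity) (Qf_lb hy hA p)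

lemma q3_le (hy : 1 ≤ y) (hA : 0 < A) (p : I2) :
    (Qf 0 y A p.1) ^ (-3:ℤ) ≤ y^3/A^3 * (sq2 p) ^ (-3:ℤ) := by
  have h2 := sq2_pos p
  have hy0 : 0 < y := lt_of_lt_of_le one_pos hy
  have hQ := Qf_pos hy hA p
  have hlb := Qf_lb hy hA p
  rw [zpow_neg, zpow_neg, zpow_ofNat, zpow_ofNat]
  rw [show y^3/A^3 * (sq2 p ^ 3)⁻¹ = ((A * sq2 p / y)^3)⁻¹ by
    field_simp]
  rw [inv_le_inv₀ (by positivity) (by positivity)]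
  exact pow_le_pow_left₀ (by positivity) hlb 3

lemma Sq3 (hy : 1 ≤ y) (hA : 0 < A) :
    Summable (fun p : I2 => (Qf 0 y A p.1) ^ (-3:ℤ)) := by
  refine Summable.of_nonneg_of_le (fun p => ?_) (fun p => q3_le hy hA p)
    (S3.mul_left (y^3/A^3))
  have := Qf_pos hy hA p; positivity

lemma q6_le (hy : 1 ≤ y) (hA : 0 < A) (p : I2) :
    (Qf 0 y A p.1) ^ (-6:ℤ) ≤ (y^3/A^3)^2 * (sq2 p) ^ (-6:ℤ) := by
  have h3 := q3_le hy hA p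
  have hQ := Qf_pos hy hA p
  have h2 := sq2_pos p
  have e1 : (Qf 0 y A p.1) ^ (-6:ℤ) = ((Qf 0 y A p.1) ^ (-3:ℤ))^2 := by
    rw [← zpow_natCast (_ ^ (-3:ℤ)) 2, ← zpow_mul]; norm_num
  have e2 : (sq2 p) ^ (-6:ℤ) = ((sq2 p) ^ (-3:ℤ))^2 := by
    rw [← zpow_natCast (_ ^ (-3:ℤ)) 2, ← zpow_mul]; norm_num
  rw [e1, e2, ← mul_pow]
  apply pow_le_pow_left₀ (by positivity) h3

lemma Sq6 (hy : 1 ≤ y) (hA : 0 < A) :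
    Summable (fun p : I2 => (Qf 0 y A p.1) ^ (-6:ℤ)) := by
  refine Summable.of_nonneg_of_le (fun p => ?_) (fun p => q6_le hy hA p)
    ((S12.mul_left ((y^3/A^3)^2)))
  have := Qf_pos hy hA p; positivity

lemma EV_eq (hy : 1 ≤ y) (hA : 0 < A) :
    EV 0 y A = (∑' p : I2, (Qf 0 y A p.1) ^ (-6:ℤ))
      - 2 * (∑' p : I2, (Qf 0 y A p.1) ^ (-3:ℤ)) := by
  unfold EV VLJc
  rw [← tsum_mul_left, ← Summable.tsum_sub (Sq6 hy hA) ((Sq3 hy hA).mul_left 2)]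

lemma T3_le (hy : 1 ≤ y) (hA : 0 < A) :
    (∑' p : I2, (Qf 0 y A p.1) ^ (-3:ℤ)) ≤ y^3/A^3 * zeta6 := by
  have := Summable.tsum_le_tsum (fun p => q3_le hy hA p) (Sq3 hy hA) (S3.mul_left (y^3/A^3))
  rwa [tsum_mul_left] at this

def pt1 : I2 := ⟨(1,0), by simp [Prod.ext_iff]⟩
def pt2 : I2 := ⟨(-1,0), by simp [Prod.ext_iff]⟩

lemma T6_ge (hy : 1 ≤ y) (hA : 0 < A) :
    2 * (y^6/A^6) ≤ (∑' p : I2, (Qf 0 y A p.1) ^ (-6:ℤ)) := by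
  have hy0 : 0 < y := lt_of_lt_of_le one_pos hy
  have hne : pt1 ≠ pt2 := by decide
  have hsub := Summable.sum_le_tsum ({pt1, pt2} : Finset I2)
    (fun p _ => by have := Qf_pos hy hA p; positivity) (Sq6 hy hA)
  rw [Finset.sum_insert (by simp [hne]), Finset.sum_singleton] at hsub
  have e1 : Qf 0 y A pt1.1 = A / y := by unfold Qf pt1; push_cast; ring
  have e2 : Qf 0 y A pt2.1 = A / y := by unfold Qf pt2; push_cast; ring
  rw [e1, e2] at hsub
  have : (A/y) ^ (-6:ℤ) = y^6/A^6 := by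
    rw [zpow_neg, zpow_ofNat, div_pow, inv_div]
  rw [this] at hsub
  linarith

lemma EV_lower (hy : 1 ≤ y) (hA : 0 < A) :
    2 * (y^6/A^6) - 2 * (y^3/A^3) * zeta6 ≤ EV 0 y A := by
  rw [EV_eq hy hA]
  have h1 := T6_ge hy hA
  have h2 := T3_le hy hA
  nlinarith

lemma EV_trial (hA : 1 ≤ A) : EV 0 A A ≤ -2 := by
  have hA0 : 0 < A := lt_of_lt_of_le one_pos hA
  -- every term is ≤ 0 since Qf ≥ 1
  have hQ1 : ∀ p : I2, 1 ≤ Qf 0 A A p.1 := by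
    intro p
    calc (1:ℝ) ≤ sq2 p := one_le_sq2 p
      _ ≤ A * sq2 p / A := le_of_eq (by field_simp)
      _ ≤ Qf 0 A A p.1 := Qf_lb hA hA0 p
  have hV : ∀ p : I2, VLJc (Qf 0 A A p.1) ≤ 0 := by
    intro p
    have h1 := hQ1 p
    have h0 : 0 < Qf 0 A A p.1 := lt_of_lt_of_le one_pos h1
    unfold VLJc
    have e3 : (Qf 0 A A p.1) ^ (-3:ℤ) ≤ 1 := by
      rw [zpow_neg, zpow_ofNat]
      rw [inv_le_one_iff₀]
      right; exact one_le_pow₀ h1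
    have e6 : (Qf 0 A A p.1) ^ (-6:ℤ) = ((Qf 0 A A p.1) ^ (-3:ℤ))^2 := by
      rw [← zpow_natCast (_ ^ (-3:ℤ)) 2, ← zpow_mul]; norm_num
    have hp3 : 0 < (Qf 0 A A p.1) ^ (-3:ℤ) := by positivity
    nlinarith
  have hsummable : Summable (fun p : I2 => VLJc (Qf 0 A A p.1)) := by
    have := (Sq6 hA hA0).sub ((Sq3 hA hA0).mul_left 2)
    exact this.congr (fun p => by unfold VLJc; ring)
  have hneg : Summable (fun p : I2 => -(VLJc (Qf 0 A A p.1))) := hsummable.neg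
  have hne : pt1 ≠ pt2 := by decide
  have hsub := Summable.sum_le_tsum ({pt1, pt2} : Finset I2)
    (fun p _ => by have := hV p; linarith) hneg
  rw [Finset.sum_insert (by simp [hne]), Finset.sum_singleton] at hsub
  rw [tsum_neg] at hsub
  have e1 : Qf 0 A A pt1.1 = 1 := by unfold Qf pt1; push_cast; field_simp; ring
  have e2 : Qf 0 A A pt2.1 = 1 := by unfold Qf pt2; push_cast; field_simp; ring
  have eV : VLJc 1 = -1 := by unfold VLJc; norm_num
  rw [e1, e2, eV] at hsub
  unfold EV
  linarith

end

def A3 : ℝ := 2 + 3 / zeta6 + zeta12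

lemma A3_pos : 0 < A3 := by
  have := zeta6_pos; have := zeta12_nonneg
  unfold A3; positivity

lemma A3_facts {A : ℝ} (hA : A3 < A) :
    2 ≤ A ∧ 3 ≤ zeta6 * A ∧ zeta12 ≤ A := by
  have h6 := zeta6_pos; have h12 := zeta12_nonneg
  have h1 : 0 < 3 / zeta6 := by positivity
  refine ⟨by unfold A3 at hA; linarith, ?_, by unfold A3 at hA; linarith⟩
  have : 3 / zeta6 ≤ A := by unfold A3 at hA; linarith
  rw [div_le_iff₀ h6] at this
  linarith [this]

/-- main quadratic inequality at a minimizer -/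
lemma key {A yA : ℝ} (hA : A3 < A) (hy : 1 ≤ yA)
    (hmin : IsMinOn (fun y => EV 0 y A) (Set.Ici 1) yA) :
    2 * (yA^3)^2 - 2 * zeta6 * A^3 * yA^3 + 4 * A^4 - zeta12 * A^2 ≤ 0 := by
  obtain ⟨hA2, hz6A, hz12A⟩ := A3_facts hA
  have hA1 : (1:ℝ) ≤ A := by linarith
  have hA0 : (0:ℝ) < A := by linarith
  have hle : EV 0 yA A ≤ EV 0 A A := isMinOn_iff.mp hmin A (by exact hA1)
  have h1 : EV 0 yA A ≤ -2 := le_trans hle (EV_trial hA1)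
  have h2 := EV_lower hy hA0
  have h3 : 2 * (yA^6/A^6) - 2 * (yA^3/A^3) * zeta6 ≤ -2 := le_trans h2 h1
  have h6 : (0:ℝ) < A^6 := by positivity
  have h4 : 2 * yA^6 - 2 * zeta6 * A^3 * yA^3 ≤ -2 * A^6 := by
    calc 2 * yA^6 - 2 * zeta6 * A^3 * yA^3
        = (2 * (yA^6/A^6) - 2 * (yA^3/A^3) * zeta6) * A^6 := by field_simp
      _ ≤ (-2) * A^6 := mul_le_mul_of_nonneg_right h3 h6.le
  have h5 : 2 * A^6 - 4 * A^4 ≥ 0 := by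
    have := mul_nonneg (pow_nonneg hA0.le 4) (by nlinarith : (0:ℝ) ≤ A^2 - 2)
    nlinarith
  have h12 : 0 ≤ zeta12 * A^2 := by have := zeta12_nonneg; positivity
  nlinarith [h4]

theorem main :
    ∃ A₃ > (0 : ℝ),
      (∀ A > A₃, ∀ yA : ℝ, 1 ≤ yA →
        IsMinOn (fun y => EV 0 y A) (Set.Ici 1) yA →
          X1 A ^ ((1 : ℝ) / 3) ≤ yA ∧ yA ≤ X2 A ^ ((1 : ℝ) / 3)) ∧
      (∃ C > (0 : ℝ), ∀ A > A₃, ∀ yA : ℝ, 1 ≤ yA →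
        IsMinOn (fun y => EV 0 y A) (Set.Ici 1) yA → yA ≤ C * A) ∧
      (∀ M > (0 : ℝ), ∃ A' : ℝ, ∀ A > A', ∀ yA : ℝ, 1 ≤ yA →
        IsMinOn (fun y => EV 0 y A) (Set.Ici 1) yA → M < yA) := by
  have h6 := zeta6_pos
  have h12 := zeta12_nonneg
  -- basic facts about the discriminant for A > A3
  have disc : ∀ {A : ℝ}, A3 < A →
      (0 ≤ 4 * zeta6 ^ 2 * A ^ 6 - 32 * A ^ 4 + 8 * zeta12 * A ^ 2) ∧
      Real.sqrt (4 * zeta6 ^ 2 * A ^ 6 - 32 * A ^ 4 + 8 * zeta12 * A ^ 2) ≤ 2 * zeta6 * A ^ 3 := by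
    intro A hA
    obtain ⟨hA2, hz6A, hz12A⟩ := A3_facts hA
    have hA0 : (0:ℝ) < A := by linarith
    have hD0 : 0 ≤ 4 * zeta6 ^ 2 * A ^ 6 - 32 * A ^ 4 + 8 * zeta12 * A ^ 2 := by
      have h9 : 9 ≤ (zeta6 * A)^2 := by nlinarith
      have hA4 : (0:ℝ) < A^4 := by positivity
      have hA2' : (0:ℝ) ≤ A^2 := by positivity
      nlinarith [mul_le_mul_of_nonneg_left h9 hA4.le]
    refine ⟨hD0, ?_⟩
    have hle : 4 * zeta6 ^ 2 * A ^ 6 - 32 * A ^ 4 + 8 * zeta12 * A ^ 2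
        ≤ (2 * zeta6 * A ^ 3)^2 := by
      have e1 : zeta12 * A^2 ≤ A * A^2 := mul_le_mul_of_nonneg_right hz12A (sq_nonneg A)
      have e2 : A * A^2 ≤ A^4 := by
        have := mul_nonneg (pow_nonneg hA0.le 3) (by linarith : (0:ℝ) ≤ A - 1)
        nlinarith
      nlinarith
    calc Real.sqrt (4 * zeta6 ^ 2 * A ^ 6 - 32 * A ^ 4 + 8 * zeta12 * A ^ 2)
        ≤ Real.sqrt ((2 * zeta6 * A ^ 3)^2) := Real.sqrt_le_sqrt hle
      _ = 2 * zeta6 * A ^ 3 := Real.sqrt_sq (by positivity)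
  -- bounds on yA^3 for minimizers
  have bounds : ∀ {A yA : ℝ}, A3 < A → 1 ≤ yA →
      IsMinOn (fun y => EV 0 y A) (Set.Ici 1) yA →
      X1 A ≤ yA^3 ∧ yA^3 ≤ X2 A := by
    intro A yA hA hy hmin
    have hq := key hA hy hmin
    obtain ⟨hD0, hsq⟩ := disc hA
    set s := Real.sqrt (4 * zeta6 ^ 2 * A ^ 6 - 32 * A ^ 4 + 8 * zeta12 * A ^ 2) with hs
    have hs0 : 0 ≤ s := Real.sqrt_nonneg _
    have hs2 : s^2 = 4 * zeta6 ^ 2 * A ^ 6 - 32 * A ^ 4 + 8 * zeta12 * A ^ 2 :=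
      Real.sq_sqrt hD0
    set X := yA^3 with hX
    constructor
    · rw [X1]
      by_contra hcon
      push_neg at hcon
      have h1 : 4*X - 2*zeta6*A^3 < -s := by linarith
      have h2 : (4*X - 2*zeta6*A^3)^2 > s^2 := by nlinarith
      nlinarith
    · rw [X2]
      by_contra hcon
      push_neg at hcon
      have h1 : 4*X - 2*zeta6*A^3 > s := by linarith
      have h2 : (4*X - 2*zeta6*A^3)^2 > s^2 := by nlinarith
      nlinarith
  refine ⟨A3, A3_pos, ?_, ?_, ?_⟩
  · intro A hA yA hy hmin
    obtain ⟨hl, hr⟩ := bounds hA hy hmin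
    obtain ⟨hD0, hsq⟩ := disc hA
    have hy0 : (0:ℝ) < yA := by linarith
    have hX1 : 0 ≤ X1 A := by rw [X1]; linarith
    have hX2 : 0 ≤ X2 A := le_trans (by positivity : (0:ℝ) ≤ yA^3) hr
    have hcube : (yA^3 : ℝ) ^ ((1:ℝ)/3) = yA := by
      rw [show (yA^3 : ℝ) = yA ^ ((3:ℕ):ℝ) by rw [Real.rpow_natCast],
        ← Real.rpow_mul hy0.le]
      norm_num
    constructor
    · calc X1 A ^ ((1:ℝ)/3) ≤ (yA^3) ^ ((1:ℝ)/3) :=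
          Real.rpow_le_rpow hX1 hl (by norm_num)
        _ = yA := hcube
    · calc yA = (yA^3) ^ ((1:ℝ)/3) := hcube.symm
        _ ≤ X2 A ^ ((1:ℝ)/3) := Real.rpow_le_rpow (by positivity) hr (by norm_num)
  · refine ⟨zeta6 + 1, by linarith, ?_⟩
    intro A hA yA hy hmin
    obtain ⟨hl, hr⟩ := bounds hA hy hmin
    obtain ⟨hD0, hsq⟩ := disc hA
    obtain ⟨hA2, hz6A, hz12A⟩ := A3_facts hA
    have hA0 : (0:ℝ) < A := by linarith
    have hX2 : X2 A ≤ zeta6 * A^3 := by rw [X2]; linarith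
    have h1 : yA^3 ≤ ((zeta6 + 1) * A)^3 := by
      calc yA^3 ≤ zeta6 * A^3 := le_trans hr hX2
        _ ≤ ((zeta6 + 1) * A)^3 := by
          have e3 : zeta6 ≤ (zeta6 + 1)^3 := by nlinarith [sq_nonneg zeta6, pow_nonneg h6.le 3]
          nlinarith [mul_le_mul_of_nonneg_right e3 (pow_nonneg hA0.le 3)]
    exact le_of_pow_le_pow_left₀ (by norm_num) (by positivity) h1
  · intro M hM
    refine ⟨A3 + zeta6 * M^3, ?_⟩
    intro A hA yA hy hmin
    have hA3 : A3 < A := by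
      have : 0 ≤ zeta6 * M^3 := mul_nonneg h6.le (pow_nonneg hM.le 3)
      linarith
    obtain ⟨hl, hr⟩ := bounds hA3 hy hmin
    have hq := key hA3 hy hmin
    obtain ⟨hA2, hz6A, hz12A⟩ := A3_facts hA3
    have hA0 : (0:ℝ) < A := by linarith
    have hA1 : (1:ℝ) ≤ A := by linarith
    have hM3 : zeta6 * M^3 < A := by nlinarith [A3_pos]
    have hX : M^3 < yA^3 := by
      by_contra hcon
      push_neg at hcon
      have h1 : zeta12 * A^2 ≤ A^3 := by nlinarith
      have h2 : 2 * zeta6 * A^3 * yA^3 ≤ 2 * yA^3 * A^3 * (zeta6) := by ring_nf; nlinarith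
      nlinarith [sq_nonneg (yA^3), pow_pos hA0 3, pow_pos hA0 4,
        mul_le_mul_of_nonneg_right hcon (by positivity : (0:ℝ) ≤ 2 * zeta6 * A^3)]
    exact lt_of_pow_lt_pow_left₀ 3 (by linarith) hX

end RectDeg

/-- Degeneracy of the minimizer among rectangular lattices: for large areas, any minimizer
`y_A ≥ 1` of `y ↦ E_V(0,y,A)` satisfies `X₁(A)^{1/3} ≤ y_A ≤ X₂(A)^{1/3}`; in particular
`y_A ≤ C·A` and `y_A → +∞` as `A → +∞`. -/
theorem rectangular_degeneracy :
    ∃ A₃ > (0 : ℝ),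
      (∀ A > A₃, ∀ yA : ℝ, 1 ≤ yA →
        IsMinOn (fun y => EV 0 y A) (Set.Ici 1) yA →
          X1 A ^ ((1 : ℝ) / 3) ≤ yA ∧ yA ≤ X2 A ^ ((1 : ℝ) / 3)) ∧
      (∃ C > (0 : ℝ), ∀ A > A₃, ∀ yA : ℝ, 1 ≤ yA →
        IsMinOn (fun y => EV 0 y A) (Set.Ici 1) yA → yA ≤ C * A) ∧
      (∀ M > (0 : ℝ), ∃ A' : ℝ, ∀ A > A', ∀ yA : ℝ, 1 ≤ yA →
        IsMinOn (fun y => EV 0 y A) (Set.Ici 1) yA → M < yA) := by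
  exact RectDeg.main
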